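/- arXiv:2103.08846 — 2 statements merged into one kernel-verified Lean document; each statement's English description precedes it below -/
import Mathlib

section
/- Let K be a negative binomial random variable with parameters r ≥ 1 and p ∈ (0,1), q = 1 - p, and let A ⊆ ℝ be Borel. Then |E[(K - rp/q)^3·1_{K∈A}] - (rp/q^2)·(1+p)/q| ≤ C_p · r^{3/2} · (P(K ∈ Aᶜ))^{1/2}, where C_p depends only on p. -/
noncomputable def negBinPMF (r p : ℝ) (k : ℕ) : ℝ :=
  Real.Gamma (r + k) / (Real.Gamma r * (Nat.factorial k)) * (1 - p) ^ r * p ^ k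

open Real MeasureTheory Set Filter

lemma base_summable {p : ℝ} (hp0 : 0 < p) (hp1 : p < 1) {r : ℝ} (hr : 0 < r) :
    Summable (fun m : ℕ => Real.Gamma (r + m) / (Real.Gamma r * (Nat.factorial m)) * p ^ m) := by
  set f : ℕ → ℝ := fun m => Real.Gamma (r + m) / (Real.Gamma r * (Nat.factorial m)) * p ^ m with hf
  have hfac : ∀ m : ℕ, (0:ℝ) < (Nat.factorial m : ℝ) := fun m => by
    exact_mod_cast Nat.factorial_pos m
  have hkey : ∀ m : ℕ, f (m + 1) = ((r + m) * p / (m + 1)) * f m := by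
    intro m
    have h1 : r + (m:ℝ) ≠ 0 := by positivity
    have h2 : Real.Gamma (r + (m + 1 : ℕ)) = (r + m) * Real.Gamma (r + m) := by
      have : r + ((m + 1 : ℕ) : ℝ) = (r + m) + 1 := by push_cast; ring
      rw [this, Real.Gamma_add_one h1]
    simp only [hf, h2, Nat.factorial_succ]
    have h3 : ((m+1).factorial : ℝ) = (m+1) * (m.factorial) := by
      push_cast [Nat.factorial_succ]; ring
    field_simp
    push_cast; ring
  apply summable_of_ratio_norm_eventually_le (r := (1 + p)/2) (by linarith)
  have hN : ∀ᶠ m : ℕ in atTop, (2 * p * r / (1 - p)) ≤ m := by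
    exact tendsto_natCast_atTop_atTop.eventually_ge_atTop _
  filter_upwards [hN] with m hm
  rw [hkey m]
  rw [norm_mul]
  have hratio : ‖(r + m) * p / (m + 1)‖ = (r + m) * p / (m + 1) := by
    rw [Real.norm_eq_abs, abs_of_nonneg]; positivity
  rw [hratio]
  have hle : (r + m) * p / (m + 1) ≤ (1 + p) / 2 := by
    rw [div_le_iff₀ (by positivity)]
    have h1 : p * r ≤ (1 - p)/2 * m := by
      have hq : (0:ℝ) < 1 - p := by linarith
      have := (div_le_iff₀ hq).1 hm
      linarith
    nlinarith [hfac m]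
  exact mul_le_mul_of_nonneg_right hle (norm_nonneg _)

lemma hasSum_base {p : ℝ} (hp0 : 0 < p) (hp1 : p < 1) {r : ℝ} (hr : 0 < r) :
    HasSum (fun m : ℕ => Real.Gamma (r + m) / (Real.Gamma r * (Nat.factorial m)) * p ^ m)
      ((1 - p) ^ (-r)) := by
  have hq : (0:ℝ) < 1 - p := by linarith
  have hΓ : (0:ℝ) < Real.Gamma r := Real.Gamma_pos_of_pos hr
  have hsum := base_summable hp0 hp1 hr
  refine (Summable.hasSum_iff hsum).2 ?_
  -- integral representation
  set F : ℕ → ℝ → ℝ := fun m x => (p ^ m / (Real.Gamma r * (Nat.factorial m))) *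
      (Real.exp (-x) * x ^ (r + m - 1)) with hF
  have hint : ∀ m : ℕ, IntegrableOn (F m) (Ioi 0) := by
    intro m
    exact (Real.GammaIntegral_convergent (by positivity : (0:ℝ) < r + m)).const_mul _
  have hval : ∀ m : ℕ, ∫ x in Ioi 0, F m x =
      Real.Gamma (r + m) / (Real.Gamma r * (Nat.factorial m)) * p ^ m := by
    intro m
    rw [hF]
    simp only
    rw [MeasureTheory.integral_const_mul, ← Real.Gamma_eq_integral (by positivity : (0:ℝ) < r + m)]
    ring
  have hnonneg : ∀ m : ℕ, ∀ x ∈ Ioi (0:ℝ), 0 ≤ F m x := by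
    intro m x hx
    have hx' : (0:ℝ) < x := hx
    have : (0:ℝ) ≤ x ^ (r + m - 1) := Real.rpow_nonneg hx'.le _
    positivity
  have hnorm : ∀ m : ℕ, ∫ x in Ioi 0, ‖F m x‖ = ∫ x in Ioi 0, F m x := by
    intro m
    refine setIntegral_congr_fun measurableSet_Ioi fun x hx => ?_
    rw [Real.norm_eq_abs, abs_of_nonneg (hnonneg m x hx)]
  have hsumnorm : Summable fun m => ∫ x in Ioi 0, ‖F m x‖ := by
    apply Summable.congr hsum
    intro m
    rw [hnorm m, hval m]
  have hswap := MeasureTheory.integral_tsum_of_summable_integral_norm hint hsumnorm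
  -- hswap : ∑' m, ∫ F m = ∫ ∑' m F m  (direction?)
  have hL : ∑' m : ℕ, Real.Gamma (r + m) / (Real.Gamma r * (Nat.factorial m)) * p ^ m
      = ∫ x in Ioi 0, (∑' m, F m x) := by
    rw [← hswap]
    exact tsum_congr fun m => (hval m).symm
  rw [hL]
  have hptwise : ∀ x ∈ Ioi (0:ℝ), (∑' m, F m x) = (1 / Real.Gamma r) * (x ^ (r - 1) * Real.exp (-((1-p) * x))) := by
    intro x hx
    have hx' : (0:ℝ) < x := hx
    have hxpow : ∀ m : ℕ, x ^ (r + m - 1) = x ^ (r - 1) * x ^ (m : ℕ) := by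
      intro m
      rw [← Real.rpow_natCast x m, ← Real.rpow_add hx']
      ring_nf
    have : ∀ m : ℕ, F m x = (Real.exp (-x) * x ^ (r-1) / Real.Gamma r) * ((p * x) ^ m / (Nat.factorial m)) := by
      intro m
      rw [hF]
      simp only
      rw [hxpow m, mul_pow]
      field_simp
    rw [tsum_congr this, tsum_mul_left]
    have hexp : (∑' m : ℕ, (p * x) ^ m / (Nat.factorial m)) = Real.exp (p * x) := by
      rw [Real.exp_eq_exp_ℝ, NormedSpace.exp_eq_tsum_div]
    rw [hexp]
    rw [Real.exp_eq_exp_ℝ]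
    have : -((1-p)*x) = -x + p * x := by ring
    rw [this, ← Real.exp_eq_exp_ℝ, Real.exp_add]
    ring
  rw [setIntegral_congr_fun measurableSet_Ioi hptwise]
  rw [MeasureTheory.integral_const_mul, Real.integral_rpow_mul_exp_neg_mul_Ioi hr hq]
  rw [one_div, Real.rpow_neg hq.le]
  field_simp
  rw [one_div, Real.inv_rpow hq.le]
  exact inv_mul_cancel₀ (Real.rpow_pos_of_pos hq r).ne'

lemma Gamma_ratio {r : ℝ} (hr : 0 < r) (j : ℕ) :
    Real.Gamma (r + j) = Real.Gamma r * ∏ i ∈ Finset.range j, (r + i) := by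
  induction j with
  | zero => simp
  | succ n ih =>
    have h1 : r + ((n+1 : ℕ) : ℝ) = (r + n) + 1 := by push_cast; ring
    rw [h1, Real.Gamma_add_one (by positivity), ih, Finset.prod_range_succ]
    push_cast
    ring

lemma descProd_cast (m j : ℕ) :
    ∏ i ∈ Finset.range j, (((m+j : ℕ):ℝ) - i) = ((m+j).factorial : ℝ) / (m.factorial : ℝ) := by
  have h1 : ∏ i ∈ Finset.range j, (((m+j : ℕ):ℝ) - i)
      = (((m+j).descFactorial j : ℕ) : ℝ) := by
    rw [Nat.descFactorial_eq_prod_range, Nat.cast_prod]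
    refine Finset.prod_congr rfl fun i hi => ?_
    have : i ≤ m + j := by
      have := Finset.mem_range.1 hi; omega
    push_cast [Nat.cast_sub this]
    ring
  rw [h1]
  have h2 := Nat.factorial_mul_descFactorial (show j ≤ m + j by omega)
  have h3 : m + j - j = m := by omega
  rw [h3] at h2
  have h4 : (m.factorial : ℝ) * ((m+j).descFactorial j : ℝ) = ((m+j).factorial : ℝ) := by
    exact_mod_cast congrArg (Nat.cast (R := ℝ)) h2
  field_simp [← h4]
  linarith [h4]

lemma hasSum_desc {p : ℝ} (hp0 : 0 < p) (hp1 : p < 1) {r : ℝ} (hr : 0 < r) (j : ℕ) :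
    HasSum (fun k : ℕ => negBinPMF r p k * ∏ i ∈ Finset.range j, ((k:ℝ) - i))
      ((∏ i ∈ Finset.range j, (r + i)) * (p / (1-p)) ^ j) := by
  have hq : (0:ℝ) < 1 - p := by linarith
  have hΓ : (0:ℝ) < Real.Gamma r := Real.Gamma_pos_of_pos hr
  have hPd : (0:ℝ) < ∏ i ∈ Finset.range j, (r + i) :=
    Finset.prod_pos fun i _ => by positivity
  set f : ℕ → ℝ := fun k => negBinPMF r p k * ∏ i ∈ Finset.range j, ((k:ℝ) - i) with hf
  set A : ℝ := (∏ i ∈ Finset.range j, (r + i)) * (1-p) ^ r * p ^ j with hA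
  have base := hasSum_base hp0 hp1 (show (0:ℝ) < r + j by positivity)
  have h1 := base.mul_left A
  have h2 : (fun m : ℕ => A * (Real.Gamma ((r + j) + m) / (Real.Gamma (r + j) * (Nat.factorial m)) * p ^ m))
      = fun m : ℕ => f (m + j) := by
    funext m
    have hc : r + ((m + j : ℕ) : ℝ) = (r + j) + m := by push_cast; ring
    simp only [hf, negBinPMF, hc, descProd_cast m j]
    rw [hA, Gamma_ratio hr j]
    have hΓrj : Real.Gamma (r+j) ≠ 0 := by rw [Gamma_ratio hr j]; positivity
    have hfm : ((m.factorial : ℕ) : ℝ) ≠ 0 := by positivity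
    have hfmj : (((m+j).factorial : ℕ) : ℝ) ≠ 0 := by positivity
    rw [Gamma_ratio hr j] at hΓrj
    field_simp
    ring
  rw [h2] at h1
  have h3 := (hasSum_nat_add_iff (f := f) j).1 h1
  have h4 : ∑ i ∈ Finset.range j, f i = 0 := by
    apply Finset.sum_eq_zero
    intro i hi
    have : ∏ i' ∈ Finset.range j, ((i:ℝ) - i') = 0 :=
      Finset.prod_eq_zero hi (by simp)
    simp [hf, this]
  rw [h4, add_zero] at h3
  have h5 : A * (1-p) ^ (-(r + (j:ℝ))) = (∏ i ∈ Finset.range j, (r + i)) * (p / (1-p)) ^ j := by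
    rw [hA]
    have : (1-p) ^ r * (1-p) ^ (-(r + (j:ℝ))) = ((1-p) ^ (j:ℕ))⁻¹ := by
      rw [← Real.rpow_natCast (1-p) j, ← Real.rpow_neg hq.le, ← Real.rpow_add hq]
      ring_nf
    rw [mul_assoc, mul_assoc, mul_comm (p ^ j), ← mul_assoc ((1-p)^r), this, div_pow]
    ring
  rwa [h5] at h3

lemma hasSum_three {p : ℝ} (hp0 : 0 < p) (hp1 : p < 1) {r : ℝ} (hr : 0 < r) :
    HasSum (fun k : ℕ => negBinPMF r p k * ((k:ℝ) - r * (p/(1-p))) ^ 3)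
      (r * (p/(1-p)) * (1 + (p/(1-p))) * (1 + 2*(p/(1-p)))) := by
  set t : ℝ := p/(1-p) with ht
  set μ : ℝ := r * t with hμ
  have D0 := hasSum_desc hp0 hp1 hr 0
  have D1 := hasSum_desc hp0 hp1 hr 1
  have D2 := hasSum_desc hp0 hp1 hr 2
  have D3 := hasSum_desc hp0 hp1 hr 3
  have H := (D3.add (D2.mul_left (3 - 3*μ))).add
    ((D1.mul_left (1 - 3*μ + 3*μ^2)).add (D0.mul_left (-μ^3)))
  have hfun : (fun k : ℕ =>
      (negBinPMF r p k * ∏ i ∈ Finset.range 3, ((k:ℝ) - i)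
        + (3 - 3*μ) * (negBinPMF r p k * ∏ i ∈ Finset.range 2, ((k:ℝ) - i)))
      + ((1 - 3*μ + 3*μ^2) * (negBinPMF r p k * ∏ i ∈ Finset.range 1, ((k:ℝ) - i))
        + (-μ^3) * (negBinPMF r p k * ∏ i ∈ Finset.range 0, ((k:ℝ) - i))))
      = fun k : ℕ => negBinPMF r p k * ((k:ℝ) - μ) ^ 3 := by
    funext k
    simp only [Finset.prod_range_succ, Finset.prod_range_zero]
    push_cast
    ring
  rw [hfun] at H
  have hval : ((∏ i ∈ Finset.range 3, (r + i)) * t ^ 3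
      + (3 - 3*μ) * ((∏ i ∈ Finset.range 2, (r + i)) * t ^ 2))
      + ((1 - 3*μ + 3*μ^2) * ((∏ i ∈ Finset.range 1, (r + i)) * t ^ 1)
      + (-μ^3) * ((∏ i ∈ Finset.range 0, (r + i)) * t ^ 0))
      = r * t * (1 + t) * (1 + 2*t) := by
    simp only [Finset.prod_range_succ, Finset.prod_range_zero]
    push_cast
    rw [hμ]
    ring
  rwa [hval] at H

lemma hasSum_six {p : ℝ} (hp0 : 0 < p) (hp1 : p < 1) {r : ℝ} (hr : 0 < r) :
    HasSum (fun k : ℕ => negBinPMF r p k * ((k:ℝ) - r * (p/(1-p))) ^ 6)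
      (r * ((p/(1-p)) + 31*(p/(1-p))^2 + 180*(p/(1-p))^3 + 390*(p/(1-p))^4
            + 360*(p/(1-p))^5 + 120*(p/(1-p))^6)
        + r^2 * (25*(p/(1-p))^2 + 180*(p/(1-p))^3 + 415*(p/(1-p))^4
            + 390*(p/(1-p))^5 + 130*(p/(1-p))^6)
        + r^3 * (15*(p/(1-p))^3 + 45*(p/(1-p))^4 + 45*(p/(1-p))^5 + 15*(p/(1-p))^6)) := by
  set t : ℝ := p/(1-p) with ht
  set μ : ℝ := r * t with hμ
  have D0 := hasSum_desc hp0 hp1 hr 0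
  have D1 := hasSum_desc hp0 hp1 hr 1
  have D2 := hasSum_desc hp0 hp1 hr 2
  have D3 := hasSum_desc hp0 hp1 hr 3
  have D4 := hasSum_desc hp0 hp1 hr 4
  have D5 := hasSum_desc hp0 hp1 hr 5
  have D6 := hasSum_desc hp0 hp1 hr 6
  have H := ((D6.add (D5.mul_left (15 - 6*μ))).add
      ((D4.mul_left (65 - 60*μ + 15*μ^2)).add (D3.mul_left (90 - 150*μ + 90*μ^2 - 20*μ^3)))).add
    (((D2.mul_left (31 - 90*μ + 105*μ^2 - 60*μ^3 + 15*μ^4)).add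
      (D1.mul_left (1 - 6*μ + 15*μ^2 - 20*μ^3 + 15*μ^4 - 6*μ^5))).add
      (D0.mul_left (μ^6)))
  have hfun : (fun k : ℕ =>
      ((negBinPMF r p k * ∏ i ∈ Finset.range 6, ((k:ℝ) - i)
        + (15 - 6*μ) * (negBinPMF r p k * ∏ i ∈ Finset.range 5, ((k:ℝ) - i)))
       + ((65 - 60*μ + 15*μ^2) * (negBinPMF r p k * ∏ i ∈ Finset.range 4, ((k:ℝ) - i))
        + (90 - 150*μ + 90*μ^2 - 20*μ^3) * (negBinPMF r p k * ∏ i ∈ Finset.range 3, ((k:ℝ) - i))))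
      + (((31 - 90*μ + 105*μ^2 - 60*μ^3 + 15*μ^4) * (negBinPMF r p k * ∏ i ∈ Finset.range 2, ((k:ℝ) - i))
        + (1 - 6*μ + 15*μ^2 - 20*μ^3 + 15*μ^4 - 6*μ^5) * (negBinPMF r p k * ∏ i ∈ Finset.range 1, ((k:ℝ) - i)))
        + (μ^6) * (negBinPMF r p k * ∏ i ∈ Finset.range 0, ((k:ℝ) - i))))
      = fun k : ℕ => negBinPMF r p k * ((k:ℝ) - μ) ^ 6 := by
    funext k
    simp only [Finset.prod_range_succ, Finset.prod_range_zero]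
    push_cast
    ring
  rw [hfun] at H
  have hval : (((∏ i ∈ Finset.range 6, (r + i)) * t ^ 6
      + (15 - 6*μ) * ((∏ i ∈ Finset.range 5, (r + i)) * t ^ 5))
      + ((65 - 60*μ + 15*μ^2) * ((∏ i ∈ Finset.range 4, (r + i)) * t ^ 4)
      + (90 - 150*μ + 90*μ^2 - 20*μ^3) * ((∏ i ∈ Finset.range 3, (r + i)) * t ^ 3)))
      + (((31 - 90*μ + 105*μ^2 - 60*μ^3 + 15*μ^4) * ((∏ i ∈ Finset.range 2, (r + i)) * t ^ 2)
      + (1 - 6*μ + 15*μ^2 - 20*μ^3 + 15*μ^4 - 6*μ^5) * ((∏ i ∈ Finset.range 1, (r + i)) * t ^ 1))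
      + (μ^6) * ((∏ i ∈ Finset.range 0, (r + i)) * t ^ 0))
      = r * (t + 31*t^2 + 180*t^3 + 390*t^4 + 360*t^5 + 120*t^6)
        + r^2 * (25*t^2 + 180*t^3 + 415*t^4 + 390*t^5 + 130*t^6)
        + r^3 * (15*t^3 + 45*t^4 + 45*t^5 + 15*t^6) := by
    simp only [Finset.prod_range_succ, Finset.prod_range_zero]
    push_cast
    rw [hμ]
    ring
  rwa [hval] at H

lemma abs_cube_le {y : ℝ} : |y^3| ≤ 1 + y^6 := by
  rw [abs_pow]
  rcases le_or_gt |y| 1 with h | h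
  · have h1 : |y|^3 ≤ 1 := pow_le_one₀ (abs_nonneg y) h
    have h2 : (0:ℝ) ≤ y^6 := by positivity
    linarith
  · have h1 : |y|^3 ≤ |y|^6 := pow_le_pow_right₀ h.le (by norm_num)
    have h2 : |y|^6 = y^6 := by
      rw [← abs_pow, abs_of_nonneg (by positivity)]
    have : (0:ℝ) ≤ 1 := one_pos.le
    linarith [h2 ▸ h1]

set_option maxHeartbeats 1000000 in
theorem negBin_third_moment_on_event (p : ℝ) (hp0 : 0 < p) (hp1 : p < 1) :
    ∃ C : ℝ, 0 < C ∧ ∀ r : ℝ, 1 ≤ r → ∀ A : Set ℝ, MeasurableSet A →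
      |(∑' k : ℕ, negBinPMF r p k * ((k : ℝ) - r * p / (1 - p)) ^ 3
          * A.indicator (fun _ => (1 : ℝ)) (k : ℝ))
        - r * p / (1 - p) ^ 2 * ((1 + p) / (1 - p))|
        ≤ C * r ^ ((3 : ℝ) / 2)
            * Real.sqrt (∑' k : ℕ, negBinPMF r p k
                * Aᶜ.indicator (fun _ => (1 : ℝ)) (k : ℝ)) := by
  have hq : (0:ℝ) < 1 - p := by linarith
  set t : ℝ := p/(1-p) with ht
  have ht0 : 0 < t := by positivity
  set Q : ℝ := t + 56*t^2 + 375*t^3 + 850*t^4 + 795*t^5 + 265*t^6 with hQdef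
  have hQ0 : 0 < Q := by positivity
  refine ⟨Real.sqrt Q + 1, by positivity, ?_⟩
  intro r hr A hA
  have hr0 : (0:ℝ) < r := by linarith
  have hΓ : (0:ℝ) < Real.Gamma r := Real.Gamma_pos_of_pos hr0
  -- pmf positivity
  have hpmf_pos : ∀ k : ℕ, 0 < negBinPMF r p k := by
    intro k
    have h1 : (0:ℝ) < r + k := add_pos_of_pos_of_nonneg hr0 (Nat.cast_nonneg k)
    have h2 := Real.Gamma_pos_of_pos h1
    have h3 : (0:ℝ) < (Nat.factorial k : ℝ) := by exact_mod_cast Nat.factorial_pos k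
    have h4 : (0:ℝ) < (1-p) ^ r := Real.rpow_pos_of_pos hq r
    unfold negBinPMF
    positivity
  set μ : ℝ := r * t with hμ
  have hrw : r * p / (1 - p) = μ := by rw [hμ, ht]; ring
  simp only [hrw]
  -- moments
  have h6 := hasSum_six hp0 hp1 hr0
  rw [← ht] at h6
  set E6 : ℝ := r * (t + 31*t^2 + 180*t^3 + 390*t^4 + 360*t^5 + 120*t^6)
        + r^2 * (25*t^2 + 180*t^3 + 415*t^4 + 390*t^5 + 130*t^6)
        + r^3 * (15*t^3 + 45*t^4 + 45*t^5 + 15*t^6) with hE6def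
  have hE6pos : 0 < E6 := by rw [hE6def]; positivity
  have hE6le : E6 ≤ Q * r^3 := by
    have hr3 : r ≤ r^3 := by nlinarith
    have hr23 : r^2 ≤ r^3 := by nlinarith
    have hA1 : (0:ℝ) ≤ t + 31*t^2 + 180*t^3 + 390*t^4 + 360*t^5 + 120*t^6 := by positivity
    have hA2 : (0:ℝ) ≤ 25*t^2 + 180*t^3 + 415*t^4 + 390*t^5 + 130*t^6 := by positivity
    rw [hE6def, hQdef]
    nlinarith [mul_le_mul_of_nonneg_right hr3 hA1, mul_le_mul_of_nonneg_right hr23 hA2]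
  have h3 := hasSum_three hp0 hp1 hr0
  rw [← ht] at h3
  -- h3 has value r * t * (1+t) * (1+2t); relate to the constant in the goal
  have hM3 : r * t * (1 + t) * (1 + 2*t) = r * p / (1 - p) ^ 2 * ((1 + p) / (1 - p)) := by
    rw [ht]; field_simp; ring
  -- indicators
  set s : ℕ → ℝ := fun k => A.indicator (fun _ => (1:ℝ)) (k:ℝ) with hs
  set sc : ℕ → ℝ := fun k => Aᶜ.indicator (fun _ => (1:ℝ)) (k:ℝ) with hsc
  have hs_add : ∀ k, s k + sc k = 1 := by
    intro k
    have h := congrFun (Set.indicator_self_add_compl A (fun _ => (1:ℝ))) (k:ℝ)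
    simp only [Pi.add_apply] at h
    exact h
  have hsc01 : ∀ k, 0 ≤ sc k ∧ sc k ≤ 1 := by
    intro k
    rw [hsc]
    simp only
    constructor
    · exact Set.indicator_nonneg (fun _ _ => one_pos.le) _
    · exact Set.indicator_le_self' (fun _ _ => one_pos.le) _
  -- summability of the pieces
  set g : ℕ → ℝ := fun k => negBinPMF r p k * ((k:ℝ) - μ)^3 * sc k with hg
  have hpmf_sum : Summable (fun k => negBinPMF r p k) := by
    have D0 := hasSum_desc hp0 hp1 hr0 0
    simp only [Finset.prod_range_zero, mul_one] at D0
    exact D0.summable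
  have habs_bound : ∀ k, |g k| ≤ negBinPMF r p k + negBinPMF r p k * ((k:ℝ) - μ)^6 := by
    intro k
    have hpk := (hpmf_pos k).le
    have h01 := hsc01 k
    rw [hg]
    simp only
    rw [abs_mul, abs_mul, abs_of_nonneg hpk, abs_of_nonneg h01.1]
    calc negBinPMF r p k * |((k:ℝ) - μ)^3| * sc k
        ≤ negBinPMF r p k * (1 + ((k:ℝ) - μ)^6) * 1 := by
          apply mul_le_mul (mul_le_mul le_rfl abs_cube_le (abs_nonneg _) hpk) h01.2 h01.1
          positivity
      _ = negBinPMF r p k + negBinPMF r p k * ((k:ℝ) - μ)^6 := by ring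
  have habs_sum : Summable (fun k => |g k|) := by
    apply Summable.of_nonneg_of_le (fun k => abs_nonneg _) habs_bound
    exact hpmf_sum.add h6.summable
  have hg_sum : Summable g := habs_sum.of_abs
  -- split the tsum
  have hsplit : (fun k : ℕ => negBinPMF r p k * ((k:ℝ) - μ)^3 * s k)
      = fun k => negBinPMF r p k * ((k:ℝ) - μ)^3 - g k := by
    funext k
    have h1 : s k = 1 - sc k := by linarith [hs_add k]
    rw [hg]
    simp only
    rw [h1]
    ring
  have htsum_eq : (∑' k : ℕ, negBinPMF r p k * ((k:ℝ) - μ)^3 * s k)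
      = r * t * (1 + t) * (1 + 2*t) - ∑' k, g k := by
    rw [hsplit, Summable.tsum_sub h3.summable hg_sum, h3.tsum_eq]
  rw [htsum_eq, ← hM3]
  have habs : |r * t * (1 + t) * (1 + 2*t) - ∑' k, g k - r * t * (1 + t) * (1 + 2*t)|
      = |∑' k, g k| := by
    rw [show r * t * (1 + t) * (1 + 2*t) - ∑' k, g k - r * t * (1 + t) * (1 + 2*t)
      = -(∑' k, g k) from by ring, abs_neg]
  rw [habs]
  -- P
  set P : ℝ := ∑' k, negBinPMF r p k * sc k with hPdef
  show |∑' k, g k| ≤ (Real.sqrt Q + 1) * r ^ ((3:ℝ)/2) * Real.sqrt P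
  have hPsummand_nonneg : ∀ k, 0 ≤ negBinPMF r p k * sc k :=
    fun k => mul_nonneg (hpmf_pos k).le (hsc01 k).1
  have hP_sum : Summable (fun k => negBinPMF r p k * sc k) := by
    apply Summable.of_nonneg_of_le hPsummand_nonneg (fun k => ?_) hpmf_sum
    nlinarith [(hsc01 k).2, (hpmf_pos k).le, (hpmf_pos k)]
  have hP0 : 0 ≤ P := tsum_nonneg hPsummand_nonneg
  have htsum_abs : |∑' k, g k| ≤ ∑' k, |g k| := by
    have := norm_tsum_le_tsum_norm (f := g) (by simpa using habs_sum)
    simpa using this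
  rcases eq_or_lt_of_le hP0 with hPz | hPpos
  · -- P = 0 : every term vanishes, g = 0
    have hzero : ∀ k, g k = 0 := by
      intro k
      have h1 : negBinPMF r p k * sc k ≤ P := by
        apply Summable.le_tsum hP_sum k
        intro j _
        exact hPsummand_nonneg j
      have h2 : negBinPMF r p k * sc k = 0 :=
        le_antisymm (by rw [← hPz] at h1; exact h1) (hPsummand_nonneg k)
      have h3 : sc k = 0 := by
        rcases mul_eq_zero.1 h2 with h | h
        · exact absurd h (hpmf_pos k).ne'
        · exact h
      rw [hg]; simp only [h3, mul_zero]
    have hgz : g = fun _ => 0 := funext hzero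
    rw [hgz, tsum_zero, abs_zero]
    positivity
  · -- P > 0
    set sE : ℝ := Real.sqrt E6 with hsE
    set sP : ℝ := Real.sqrt P with hsP
    have hsE0 : 0 < sE := Real.sqrt_pos.2 hE6pos
    have hsP0 : 0 < sP := Real.sqrt_pos.2 hPpos
    have hsEsq : sE * sE = E6 := Real.mul_self_sqrt hE6pos.le
    have hsPsq : sP * sP = P := Real.mul_self_sqrt hP0
    set a : ℝ := sE / sP with ha
    have ha0 : 0 < a := div_pos hsE0 hsP0
    -- termwise bound
    have hterm : ∀ k, |g k| ≤ negBinPMF r p k * ((k:ℝ) - μ)^6 / (2*a)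
        + a/2 * (negBinPMF r p k * sc k) := by
      intro k
      have hpk := (hpmf_pos k).le
      have h01 := hsc01 k
      set y : ℝ := (k:ℝ) - μ with hy
      have hcube : |y^3| ≤ (y^6 + a^2)/(2*a) := by
        rw [le_div_iff₀ (by positivity : (0:ℝ) < 2*a)]
        nlinarith [sq_nonneg (|y^3| - a), sq_abs (y^3), abs_nonneg (y^3)]
      have : |g k| = negBinPMF r p k * |y^3| * sc k := by
        rw [hg]
        simp only
        rw [abs_mul, abs_mul, abs_of_nonneg hpk, abs_of_nonneg h01.1, hy]
      rw [this]
      calc negBinPMF r p k * |y^3| * sc k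
          ≤ negBinPMF r p k * ((y^6 + a^2)/(2*a)) * sc k := by
            apply mul_le_mul_of_nonneg_right _ h01.1
            exact mul_le_mul_of_nonneg_left hcube hpk
        _ = negBinPMF r p k * y^6 * sc k / (2*a) + a/2 * (negBinPMF r p k * sc k) := by
            field_simp
        _ ≤ negBinPMF r p k * y^6 / (2*a) + a/2 * (negBinPMF r p k * sc k) := by
            have hy6 : (0:ℝ) ≤ y^6 := by positivity
            have : negBinPMF r p k * y^6 * sc k ≤ negBinPMF r p k * y^6 :=
              mul_le_of_le_one_right (mul_nonneg hpk hy6) h01.2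
            have h2a : (0:ℝ) < 2*a := by positivity
            gcongr
  -- sum the termwise bound
    have hRHSsum : HasSum (fun k => negBinPMF r p k * ((k:ℝ) - μ)^6 / (2*a)
        + a/2 * (negBinPMF r p k * sc k)) (E6/(2*a) + a/2 * P) := by
      exact (h6.div_const (2*a)).add (hP_sum.hasSum.mul_left (a/2))
    have hsum_le : (∑' k, |g k|) ≤ E6/(2*a) + a/2 * P := by
      rw [← hRHSsum.tsum_eq]
      exact Summable.tsum_le_tsum hterm habs_sum hRHSsum.summable
    have hfinal : E6/(2*a) + a/2 * P = sE * sP := by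
      rw [ha, ← hsEsq, ← hsPsq]
      field_simp
      ring
    have hchain : |∑' k, g k| ≤ sE * sP := by
      calc |∑' k, g k| ≤ ∑' k, |g k| := htsum_abs
        _ ≤ E6/(2*a) + a/2 * P := hsum_le
        _ = sE * sP := hfinal
    -- bound sE
    have hr32 : Real.sqrt (r^3) = r ^ ((3:ℝ)/2) := by
      rw [Real.sqrt_eq_rpow, ← Real.rpow_natCast r 3, ← Real.rpow_mul hr0.le]
      norm_num
    have hsEle : sE ≤ (Real.sqrt Q + 1) * r ^ ((3:ℝ)/2) := by
      have h1 : sE ≤ Real.sqrt (Q * r^3) := Real.sqrt_le_sqrt hE6le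
      have h2 : Real.sqrt (Q * r^3) = Real.sqrt Q * (r ^ ((3:ℝ)/2)) := by
        rw [Real.sqrt_mul hQ0.le, hr32]
      have h3 : (0:ℝ) ≤ r ^ ((3:ℝ)/2) := Real.rpow_nonneg hr0.le _
      have h4 : Real.sqrt Q * (r ^ ((3:ℝ)/2)) ≤ (Real.sqrt Q + 1) * r ^ ((3:ℝ)/2) := by
        apply mul_le_mul_of_nonneg_right _ h3
        linarith
      linarith [h1.trans_eq h2]
    calc |∑' k, g k| ≤ sE * sP := hchain
      _ ≤ (Real.sqrt Q + 1) * r ^ ((3:ℝ)/2) * sP :=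
          mul_le_mul_of_nonneg_right hsEle hsP0.le
end

section
/- For fixed k ∈ ℕ and any c ∈ ℝ, with δ_x := (x - rp/q)/√(rp/q²) and φ the standard normal density, one has ∫_{δ_{k-1/2}}^{δ_{k+1/2}} φ(y) dy = (q/√(rp))·φ(δ_k)·(1 + (q²/(24rp))·(δ_k² - 1) + E), where |E| ≤ C_p·(1 + |δ_k|⁵)/r² for a constant C_p depending only on p, uniformly over k with |δ_k| ≤ r^{1/6}. -/
open MeasureTheory

noncomputable def stdNormalPDF (y : ℝ) : ℝ :=
  Real.exp (-(y ^ 2) / 2) / Real.sqrt (2 * Real.pi)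

lemma phi_pos (y : ℝ) : 0 < stdNormalPDF y :=
  div_pos (Real.exp_pos _) (Real.sqrt_pos.2 (by positivity))

lemma phi_cont : Continuous stdNormalPDF := by
  unfold stdNormalPDF; continuity

lemma hasDerivAt_phi (y : ℝ) : HasDerivAt stdNormalPDF (-y * stdNormalPDF y) y := by
  have h : HasDerivAt (fun y : ℝ => -(y ^ 2) / 2) (-y) y := by
    have := ((hasDerivAt_pow 2 y).neg).div_const 2
    refine this.congr_deriv ?_; simp [id]; ring
  have := (h.exp).div_const (Real.sqrt (2 * Real.pi))
  refine this.congr_deriv ?_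
  unfold stdNormalPDF; ring

lemma hasDerivAt_phi1 (y : ℝ) :
    HasDerivAt (fun y => -y * stdNormalPDF y) ((y ^ 2 - 1) * stdNormalPDF y) y := by
  have := ((hasDerivAt_id y).neg).mul (hasDerivAt_phi y)
  refine this.congr_deriv ?_; simp [id]; ring

lemma hasDerivAt_phi2 (y : ℝ) :
    HasDerivAt (fun y => (y ^ 2 - 1) * stdNormalPDF y) ((3 * y - y ^ 3) * stdNormalPDF y) y := by
  have := ((hasDerivAt_pow 2 y).sub_const 1).mul (hasDerivAt_phi y)
  refine this.congr_deriv ?_; simp [id]; ring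

lemma hasDerivAt_phi3 (y : ℝ) :
    HasDerivAt (fun y => (3 * y - y ^ 3) * stdNormalPDF y)
      ((y ^ 4 - 6 * y ^ 2 + 3) * stdNormalPDF y) y := by
  have h : HasDerivAt (fun y : ℝ => 3 * y - y ^ 3) (3 - 3 * y ^ 2) y := by
    have := ((hasDerivAt_id y).const_mul 3).sub (hasDerivAt_pow 3 y)
    refine this.congr_deriv ?_ <;> simp [id] <;> ring
  have := h.mul (hasDerivAt_phi y)
  refine this.congr_deriv ?_; simp [id]; ring

lemma midpoint_est (a T M : ℝ) (hT : 0 ≤ T)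
    (hM : ∀ y ∈ Set.Icc (a - T) (a + T), |(y ^ 4 - 6 * y ^ 2 + 3) * stdNormalPDF y| ≤ M) :
    |(∫ y in (a - T)..(a + T), stdNormalPDF y)
        - (2 * T * stdNormalPDF a + T ^ 3 / 3 * ((a ^ 2 - 1) * stdNormalPDF a))|
      ≤ 2 * M * T ^ 5 := by
  set φ := stdNormalPDF with hφ
  set s : Set ℝ := Set.Icc (a - T) (a + T) with hs
  have hconv : Convex ℝ s := convex_Icc _ _
  have has : a ∈ s := by constructor <;> simp <;> linarith
  have habs : ∀ x ∈ s, |x - a| ≤ T := by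
    intro x hx; rw [abs_le]; constructor <;> [linarith [hx.1]; linarith [hx.2]]
  have hM0 : 0 ≤ M := le_trans (abs_nonneg _) (hM a has)
  -- step 1 : third derivative variation
  have h3 : ∀ x ∈ s, |(3 * x - x ^ 3) * φ x - (3 * a - a ^ 3) * φ a| ≤ M * T := by
    intro x hx
    have := hconv.norm_image_sub_le_of_norm_hasDerivWithin_le
      (f := fun y => (3 * y - y ^ 3) * φ y)
      (f' := fun y => (y ^ 4 - 6 * y ^ 2 + 3) * φ y)
      (fun y hy => (hasDerivAt_phi3 y).hasDerivWithinAt) (fun y hy => hM y hy) has hx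
    calc |(3 * x - x ^ 3) * φ x - (3 * a - a ^ 3) * φ a| ≤ M * ‖x - a‖ := this
    _ ≤ M * T := by rw [Real.norm_eq_abs]; exact mul_le_mul_of_nonneg_left (habs x hx) hM0
  -- step 2
  set u2 : ℝ → ℝ := fun x => (x ^ 2 - 1) * φ x - (a ^ 2 - 1) * φ a - (x - a) * ((3 * a - a ^ 3) * φ a)
    with hu2
  have h2 : ∀ x ∈ s, |u2 x| ≤ M * T * T := by
    intro x hx
    have hd : ∀ y ∈ s, HasDerivWithinAt u2
        ((3 * y - y ^ 3) * φ y - (3 * a - a ^ 3) * φ a) s y := by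
      intro y hy
      have := ((hasDerivAt_phi2 y).sub_const ((a ^ 2 - 1) * φ a)).sub
        (((hasDerivAt_id y).sub_const a).mul_const ((3 * a - a ^ 3) * φ a))
      exact (this.congr_deriv (by simp [hφ])).hasDerivWithinAt
    have := hconv.norm_image_sub_le_of_norm_hasDerivWithin_le hd h3 has hx
    have hua : u2 a = 0 := by simp [hu2]
    rw [hua, sub_zero] at this
    calc |u2 x| ≤ M * T * ‖x - a‖ := this
    _ ≤ M * T * T := mul_le_mul_of_nonneg_left (habs x hx) (by positivity)
  -- step 3
  set u1 : ℝ → ℝ := fun x => -x * φ x - (-a * φ a) - (x - a) * ((a ^ 2 - 1) * φ a)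
      - (x - a) ^ 2 / 2 * ((3 * a - a ^ 3) * φ a) with hu1
  have h1 : ∀ x ∈ s, |u1 x| ≤ M * T * T * T := by
    intro x hx
    have hd : ∀ y ∈ s, HasDerivWithinAt u1 (u2 y) s y := by
      intro y hy
      have := (((hasDerivAt_phi1 y).sub_const (-a * φ a)).sub
        (((hasDerivAt_id y).sub_const a).mul_const ((a ^ 2 - 1) * φ a))).sub
        (((((hasDerivAt_id y).sub_const a).pow 2).div_const 2).mul_const ((3 * a - a ^ 3) * φ a))
      have hD : HasDerivAt u1 (u2 y) y := by
        refine this.congr_deriv ?_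
        simp only [hu2, hφ, id_eq]
        push_cast
        ring
      exact hD.hasDerivWithinAt
    have := hconv.norm_image_sub_le_of_norm_hasDerivWithin_le hd h2 has hx
    have hua : u1 a = 0 := by simp [hu1]
    rw [hua, sub_zero] at this
    calc |u1 x| ≤ M * T * T * ‖x - a‖ := this
    _ ≤ M * T * T * T := mul_le_mul_of_nonneg_left (habs x hx) (by positivity)
  -- step 4
  set u0 : ℝ → ℝ := fun x => φ x - φ a - (x - a) * (-a * φ a)
      - (x - a) ^ 2 / 2 * ((a ^ 2 - 1) * φ a)
      - (x - a) ^ 3 / 6 * ((3 * a - a ^ 3) * φ a) with hu0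
  have h0 : ∀ x ∈ s, |u0 x| ≤ M * T * T * T * T := by
    intro x hx
    have hd : ∀ y ∈ s, HasDerivWithinAt u0 (u1 y) s y := by
      intro y hy
      have := ((((hasDerivAt_phi y).sub_const (φ a)).sub
        (((hasDerivAt_id y).sub_const a).mul_const (-a * φ a))).sub
        (((((hasDerivAt_id y).sub_const a).pow 2).div_const 2).mul_const ((a ^ 2 - 1) * φ a))).sub
        (((((hasDerivAt_id y).sub_const a).pow 3).div_const 6).mul_const ((3 * a - a ^ 3) * φ a))
      have hD : HasDerivAt u0 (u1 y) y := by
        refine this.congr_deriv ?_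
        simp only [hu1, hφ, id_eq]
        push_cast
        ring
      exact hD.hasDerivWithinAt
    have := hconv.norm_image_sub_le_of_norm_hasDerivWithin_le hd h1 has hx
    have hua : u0 a = 0 := by simp [hu0]
    rw [hua, sub_zero] at this
    calc |u0 x| ≤ M * T * T * T * ‖x - a‖ := this
    _ ≤ M * T * T * T * T := mul_le_mul_of_nonneg_left (habs x hx) (by positivity)
  -- integrate
  have hint : |∫ x in (a - T)..(a + T), u0 x| ≤ M * T * T * T * T * |(a + T) - (a - T)| := by
    rw [← Real.norm_eq_abs (∫ x in (a - T)..(a + T), u0 x)]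
    apply intervalIntegral.norm_integral_le_of_norm_le_const
    intro x hx
    rw [Real.norm_eq_abs]
    apply h0
    have hle : a - T ≤ a + T := by linarith
    rw [Set.uIoc_of_le hle] at hx
    exact Set.Ioc_subset_Icc_self hx
  -- compute the polynomial integrals
  have key : ∀ n : ℕ, (∫ x in (a - T)..(a + T), (x - a) ^ n)
      = (T ^ (n + 1) - (-T) ^ (n + 1)) / (n + 1) := by
    intro n
    have h := intervalIntegral.integral_comp_sub_right (a := a - T) (b := a + T)
      (fun x => x ^ n) a
    rw [h, show a - T - a = -T by ring, show a + T - a = T by ring, integral_pow]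
  have hφi : IntervalIntegrable φ volume (a - T) (a + T) :=
    phi_cont.intervalIntegrable _ _
  have hci : IntervalIntegrable (fun _ : ℝ => φ a) volume (a - T) (a + T) :=
    intervalIntegrable_const
  have h1i : IntervalIntegrable (fun x : ℝ => (x - a) * (-a * φ a)) volume (a - T) (a + T) :=
    (((continuous_id.sub continuous_const).mul continuous_const).intervalIntegrable _ _)
  have h2i : IntervalIntegrable (fun x : ℝ => (x - a) ^ 2 / 2 * ((a ^ 2 - 1) * φ a)) volume
      (a - T) (a + T) :=
    (((((continuous_id.sub continuous_const).pow 2).div_const 2).mul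
      continuous_const).intervalIntegrable _ _)
  have h3i : IntervalIntegrable (fun x : ℝ => (x - a) ^ 3 / 6 * ((3 * a - a ^ 3) * φ a)) volume
      (a - T) (a + T) :=
    (((((continuous_id.sub continuous_const).pow 3).div_const 6).mul
      continuous_const).intervalIntegrable _ _)
  have I1 : (∫ x in (a - T)..(a + T), (x - a) * (-a * φ a)) = 0 := by
    rw [intervalIntegral.integral_mul_const]
    have := key 1
    simp only [pow_one] at this
    rw [this]; norm_num
  have I2 : (∫ x in (a - T)..(a + T), (x - a) ^ 2 / 2 * ((a ^ 2 - 1) * φ a))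
      = T ^ 3 / 3 * ((a ^ 2 - 1) * φ a) := by
    have he : (fun x : ℝ => (x - a) ^ 2 / 2 * ((a ^ 2 - 1) * φ a))
        = fun x : ℝ => (x - a) ^ 2 * ((a ^ 2 - 1) * φ a / 2) := by funext x; ring
    rw [he, intervalIntegral.integral_mul_const, key 2]
    norm_num; ring
  have I3 : (∫ x in (a - T)..(a + T), (x - a) ^ 3 / 6 * ((3 * a - a ^ 3) * φ a)) = 0 := by
    have he : (fun x : ℝ => (x - a) ^ 3 / 6 * ((3 * a - a ^ 3) * φ a))
        = fun x : ℝ => (x - a) ^ 3 * ((3 * a - a ^ 3) * φ a / 6) := by funext x; ring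
    rw [he, intervalIntegral.integral_mul_const, key 3]
    norm_num
  have hsplit : (∫ x in (a - T)..(a + T), u0 x)
      = (∫ x in (a - T)..(a + T), φ x)
        - (2 * T * φ a + T ^ 3 / 3 * ((a ^ 2 - 1) * φ a)) := by
    rw [hu0]
    rw [intervalIntegral.integral_sub (((hφi.sub hci).sub h1i).sub h2i) h3i,
        intervalIntegral.integral_sub ((hφi.sub hci).sub h1i) h2i,
        intervalIntegral.integral_sub (hφi.sub hci) h1i,
        intervalIntegral.integral_sub hφi hci,
        intervalIntegral.integral_const, I1, I2, I3]
    rw [smul_eq_mul]; ring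
  have habs2 : |(a + T) - (a - T)| = 2 * T := by
    rw [show (a + T) - (a - T) = 2 * T by ring, abs_of_nonneg (by linarith)]
  have hfin := hint
  rw [habs2, hsplit] at hfin
  calc |(∫ y in (a - T)..(a + T), φ y) - (2 * T * φ a + T ^ 3 / 3 * ((a ^ 2 - 1) * φ a))|
      ≤ M * T * T * T * T * (2 * T) := hfin
    _ = 2 * M * T ^ 5 := by ring

lemma aux_poly (x : ℝ) (hx : 0 ≤ x) :
    (x + 1) ^ 4 + 6 * (x + 1) ^ 2 + 3 ≤ 100 * (1 + x ^ 5) := by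
  rcases le_or_gt x 1 with h | h
  · have h1 : (x + 1) ^ 4 ≤ 2 ^ 4 := pow_le_pow_left₀ (by linarith) (by linarith) 4
    have h2 : (x + 1) ^ 2 ≤ 2 ^ 2 := pow_le_pow_left₀ (by linarith) (by linarith) 2
    have h3 : (0:ℝ) ≤ x ^ 5 := by positivity
    nlinarith
  · have h1 : x ^ 4 ≤ x ^ 5 := pow_le_pow_right₀ h.le (by norm_num)
    have h2 : x ^ 3 ≤ x ^ 5 := pow_le_pow_right₀ h.le (by norm_num)
    have h3 : x ^ 2 ≤ x ^ 5 := pow_le_pow_right₀ h.le (by norm_num)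
    have h4 : x ≤ x ^ 5 := by
      calc x = x ^ 1 := (pow_one x).symm
      _ ≤ x ^ 5 := pow_le_pow_right₀ h.le (by norm_num)
    nlinarith

lemma abs_quartic_le (A y : ℝ) (h4 : y ^ 4 ≤ (A + 1) ^ 4) (h2 : y ^ 2 ≤ (A + 1) ^ 2) :
    |y ^ 4 - 6 * y ^ 2 + 3| ≤ (A + 1) ^ 4 + 6 * (A + 1) ^ 2 + 3 := by
  have hy4 : (0:ℝ) ≤ y ^ 4 := by positivity
  have hB4 : (0:ℝ) ≤ (A + 1) ^ 4 := by positivity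
  rw [abs_le]
  constructor
  · nlinarith
  · nlinarith [sq_nonneg y]

lemma sq_diff_le (a y T : ℝ) (hya : |y - a| ≤ T) (haT : |a| * T ≤ 1) :
    a ^ 2 - y ^ 2 ≤ 4 := by
  have h2 : -(a * (y - a)) ≤ |a| * T := by
    calc -(a * (y - a)) ≤ |a * (y - a)| := neg_le_abs _
    _ = |a| * |y - a| := abs_mul _ _
    _ ≤ |a| * T := mul_le_mul_of_nonneg_left hya (abs_nonneg a)
  have h3 : a ^ 2 - y ^ 2 = -((y - a) ^ 2) - 2 * (a * (y - a)) := by ring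
  nlinarith [sq_nonneg (y - a)]

set_option maxHeartbeats 1000000 in
theorem gaussian_cell_integral_expansion (p : ℝ) (hp0 : 0 < p) (hp1 : p < 1) :
    ∃ C : ℝ, 0 < C ∧ ∀ r : ℝ, 0 < r → ∀ k : ℕ,
      let q := 1 - p
      let δ : ℝ → ℝ := fun x => (x - r * p / q) / Real.sqrt (r * p / q ^ 2)
      |δ (k : ℝ)| ≤ r ^ ((1 : ℝ) / 6) →
        ∃ E : ℝ,
          (∫ y in Set.Ioc (δ ((k : ℝ) - 1 / 2)) (δ ((k : ℝ) + 1 / 2)), stdNormalPDF y)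
            = q / Real.sqrt (r * p) * stdNormalPDF (δ (k : ℝ))
              * (1 + q ^ 2 / (24 * r * p) * ((δ (k : ℝ)) ^ 2 - 1) + E) ∧
          |E| ≤ C * (1 + |δ (k : ℝ)| ^ 5) / r ^ 2 := by
  have hq : (0:ℝ) < 1 - p := by linarith
  set sp := Real.sqrt p with hsp
  have hsp0 : 0 < sp := Real.sqrt_pos.2 hp0
  set c0 : ℝ := (1 - p) / (2 * sp) with hc0d
  have hc00 : 0 ≤ c0 := div_nonneg hq.le (by positivity)
  set R : ℝ := (1 + c0) ^ 3 + (1 - p) ^ 2 / p + 1 with hRd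
  have hcube0 : (0:ℝ) ≤ (1 + c0) ^ 3 := by positivity
  have hdiv0 : (0:ℝ) ≤ (1 - p) ^ 2 / p := by positivity
  have hR1 : 1 ≤ R := by rw [hRd]; linarith
  have hR0 : 0 < R := by linarith
  set C1 : ℝ := Real.exp (R / 2) * R ^ 2 + R ^ 2 + (1 - p) ^ 2 * R * (R + 1) / (24 * p)
    with hC1d
  set C2 : ℝ := 100 * Real.exp 2 * (1 - p) ^ 4 / (16 * p ^ 2) with hC2d
  have hC10 : 0 ≤ C1 := by
    rw [hC1d]
    have := Real.exp_pos (R / 2)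
    positivity
  have hC20 : 0 ≤ C2 := by rw [hC2d]; positivity
  clear_value sp c0 R C1 C2
  refine ⟨C1 + C2 + 1, by linarith, ?_⟩
  intro r hr k q δ hδk
  have hqd : q = 1 - p := rfl
  have hδd : δ = fun x => (x - r * p / q) / Real.sqrt (r * p / q ^ 2) := rfl
  have hq0 : 0 < q := by rw [hqd]; linarith
  set a := δ (k : ℝ) with had
  set s := Real.sqrt (r * p) with hsd
  have hs0 : 0 < s := Real.sqrt_pos.2 (by positivity)
  have hs2 : s ^ 2 = r * p := Real.sq_sqrt (by positivity)
  set T := q / (2 * s) with hTd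
  have hT0 : 0 < T := by positivity
  have hsqrt : Real.sqrt (r * p / q ^ 2) = s / q := by
    rw [hsd, Real.sqrt_div (by positivity), Real.sqrt_sq hq0.le]
  have hδx : ∀ x : ℝ, δ x = (x - r * p / q) * q / s := by
    intro x
    rw [hδd]
    simp only
    rw [hsqrt]
    field_simp
  have hlo : δ ((k : ℝ) - 1 / 2) = a - T := by
    rw [hδx, had, hδx, hTd]; field_simp; ring
  have hhi : δ ((k : ℝ) + 1 / 2) = a + T := by
    rw [hδx, had, hδx, hTd]; field_simp; ring
  have hIoc : (∫ y in Set.Ioc (δ ((k : ℝ) - 1 / 2)) (δ ((k : ℝ) + 1 / 2)), stdNormalPDF y)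
      = ∫ y in (a - T)..(a + T), stdNormalPDF y := by
    rw [hlo, hhi, intervalIntegral.integral_of_le (by linarith)]
  set I := ∫ y in (a - T)..(a + T), stdNormalPDF y with hId
  set φa := stdNormalPDF a with hφad
  have hφa0 : 0 < φa := phi_pos a
  have hqT : q = 2 * T * s := by rw [hTd]; field_simp
  set E := I / (q / s * φa) - 1 - q ^ 2 / (24 * r * p) * (a ^ 2 - 1) with hEd
  have hPne : q / s * φa ≠ 0 := by positivity
  have h2T : q / s = 2 * T := by rw [hTd]; field_simp
  refine ⟨E, ?_, ?_⟩
  · rw [hIoc, hEd]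
    rw [show 1 + q ^ 2 / (24 * r * p) * (a ^ 2 - 1)
        + (I / (q / s * φa) - 1 - q ^ 2 / (24 * r * p) * (a ^ 2 - 1))
        = I / (q / s * φa) by ring, mul_div_cancel₀ _ hPne]
  · -- the error bound
    have hEeq : E = (I - (2 * T * φa + T ^ 3 / 3 * ((a ^ 2 - 1) * φa))) / (2 * T * φa) := by
      rw [hEd, h2T]
      have hq2 : q ^ 2 = 4 * T ^ 2 * (r * p) := by rw [hqT, ← hs2]; ring
      rw [hq2]
      field_simp
      ring
    clear_value E I φa a T s δ q
    rcases le_or_gt R r with hrR | hrR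
    · -- large r : Taylor estimate
      have hq2R : (1 - p) ^ 2 / p ≤ r := by rw [hRd] at hrR; linarith
      have hrpq : q ^ 2 ≤ r * p := by
        rw [div_le_iff₀ hp0] at hq2R
        rw [hqd]
        linarith
      have hT1 : T ≤ 1 := by
        rw [hTd, div_le_one (by positivity)]
        have h2 : q ≤ s := by
          rw [hsd]
          calc q = Real.sqrt (q ^ 2) := (Real.sqrt_sq hq0.le).symm
          _ ≤ Real.sqrt (r * p) := Real.sqrt_le_sqrt hrpq
        linarith
      set r3 := r ^ ((1:ℝ)/3) with hr3d
      set r6 := r ^ ((1:ℝ)/6) with hr6d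
      have hr30 : 0 < r3 := Real.rpow_pos_of_pos hr _
      have hr60 : 0 < r6 := Real.rpow_pos_of_pos hr _
      have hc0r3 : 1 + c0 ≤ r3 := by
        have h1 : (1 + c0) ^ 3 ≤ r := by rw [hRd] at hrR; linarith
        have h2 := Real.rpow_le_rpow (by positivity) h1 (by norm_num : (0:ℝ) ≤ 1/3)
        rwa [← Real.rpow_natCast (1 + c0) 3, ← Real.rpow_mul (by positivity),
          show ((3:ℕ):ℝ) * (1/3) = 1 by norm_num, Real.rpow_one] at h2
      have hqr3 : q ≤ 2 * sp * r3 := by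
        have he : q = 2 * sp * c0 := by rw [hc0d, hqd]; field_simp
        rw [he]
        have h3 : c0 ≤ r3 := by linarith
        exact mul_le_mul_of_nonneg_left h3 (by positivity)
      have hs_split : s = r6 * r3 * sp := by
        rw [hsd, Real.sqrt_mul hr.le, hsp]
        congr 1
        rw [Real.sqrt_eq_rpow, hr6d, hr3d, ← Real.rpow_add hr]
        norm_num
      have haT : |a| * T ≤ 1 := by
        have h1 : |a| * T ≤ r6 * T := mul_le_mul_of_nonneg_right hδk hT0.le
        have h2 : r6 * T ≤ 1 := by
          rw [hTd, hs_split]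
          have he : r6 * (q / (2 * (r6 * r3 * sp))) = q / (2 * r3 * sp) := by
            field_simp
          rw [he, div_le_one (by positivity)]
          exact hqr3.trans_eq (by ring)
        exact h1.trans h2
      set Q := (|a| + 1) ^ 4 + 6 * (|a| + 1) ^ 2 + 3 with hQd
      have hQ0 : 0 < Q := by positivity
      have hMb : ∀ y ∈ Set.Icc (a - T) (a + T),
          |(y ^ 4 - 6 * y ^ 2 + 3) * stdNormalPDF y| ≤ Q * Real.exp 2 * φa := by
        intro y hy
        have hya : |y - a| ≤ T := by
          rw [abs_le]; constructor
          · linarith [hy.1]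
          · linarith [hy.2]
        have hyabs : |y| ≤ |a| + 1 := by
          have h := abs_sub_abs_le_abs_sub y a
          linarith
        have habs4 : |y| ^ 4 = y ^ 4 := by
          rw [← abs_pow]; exact abs_of_nonneg (by positivity)
        have habs2 : |y| ^ 2 = y ^ 2 := sq_abs y
        have h4 : y ^ 4 ≤ (|a| + 1) ^ 4 := by
          rw [← habs4]; exact pow_le_pow_left₀ (abs_nonneg y) hyabs 4
        have h2y : y ^ 2 ≤ (|a| + 1) ^ 2 := by
          rw [← habs2]; exact pow_le_pow_left₀ (abs_nonneg y) hyabs 2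
        have hpoly : |y ^ 4 - 6 * y ^ 2 + 3| ≤ Q := by
          rw [hQd]
          exact abs_quartic_le |a| y h4 h2y
        have hφy : stdNormalPDF y ≤ Real.exp 2 * φa := by
          have h1 : a ^ 2 - y ^ 2 ≤ 4 := sq_diff_le a y T hya haT
          have hkey : -(y ^ 2) / 2 ≤ 2 + -(a ^ 2) / 2 := by linarith
          have := Real.exp_le_exp.2 hkey
          calc stdNormalPDF y = Real.exp (-(y ^ 2) / 2) / Real.sqrt (2 * Real.pi) := rfl
          _ ≤ Real.exp (2 + -(a ^ 2) / 2) / Real.sqrt (2 * Real.pi) := by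
              have hπ : (0:ℝ) < Real.sqrt (2 * Real.pi) :=
                Real.sqrt_pos.2 (by positivity)
              exact (div_le_div_iff_of_pos_right hπ).2 this
          _ = Real.exp 2 * φa := by
              rw [Real.exp_add, hφad]
              show _ = Real.exp 2 * (Real.exp (-(a ^ 2) / 2) / Real.sqrt (2 * Real.pi))
              ring
        calc |(y ^ 4 - 6 * y ^ 2 + 3) * stdNormalPDF y|
            = |y ^ 4 - 6 * y ^ 2 + 3| * stdNormalPDF y := by
              rw [abs_mul, abs_of_pos (phi_pos y)]
        _ ≤ Q * (Real.exp 2 * φa) :=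
              mul_le_mul hpoly hφy (phi_pos y).le hQ0.le
        _ = Q * Real.exp 2 * φa := by ring
      have hmid := midpoint_est a T (Q * Real.exp 2 * φa) hT0.le hMb
      rw [← hId, ← hφad] at hmid
      have hEb : |E| ≤ Q * Real.exp 2 * T ^ 4 := by
        rw [hEeq, abs_div, abs_of_pos (by positivity : (0:ℝ) < 2 * T * φa),
          div_le_iff₀ (by positivity : (0:ℝ) < 2 * T * φa)]
        calc |I - (2 * T * φa + T ^ 3 / 3 * ((a ^ 2 - 1) * φa))|
            ≤ 2 * (Q * Real.exp 2 * φa) * T ^ 5 := hmid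
        _ = Q * Real.exp 2 * T ^ 4 * (2 * T * φa) := by ring
      have hT4 : T ^ 4 = q ^ 4 / (16 * (r * p) ^ 2) := by
        rw [hTd, div_pow]
        congr 1
        rw [← hs2]; ring
      have hQle : Q ≤ 100 * (1 + |a| ^ 5) := by
        rw [hQd]; exact aux_poly |a| (abs_nonneg a)
      have hfin : Q * Real.exp 2 * T ^ 4 ≤ C2 * (1 + |a| ^ 5) / r ^ 2 := by
        have hstep : Q * Real.exp 2 * T ^ 4
            ≤ (100 * (1 + |a| ^ 5)) * Real.exp 2 * T ^ 4 := by
          apply mul_le_mul_of_nonneg_right _ (by positivity)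
          exact mul_le_mul_of_nonneg_right hQle (Real.exp_pos 2).le
        have heq : (100 * (1 + |a| ^ 5)) * Real.exp 2 * T ^ 4
            = C2 * (1 + |a| ^ 5) / r ^ 2 := by
          rw [hT4, hC2d, hqd]
          field_simp
        exact le_of_le_of_eq hstep heq
      have hlast : C2 * (1 + |a| ^ 5) / r ^ 2 ≤ (C1 + C2 + 1) * (1 + |a| ^ 5) / r ^ 2 := by
        apply div_le_div_of_nonneg_right _ (by positivity)
        exact mul_le_mul_of_nonneg_right (by linarith) (by positivity)
      calc |E| ≤ Q * Real.exp 2 * T ^ 4 := hEb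
      _ ≤ C2 * (1 + |a| ^ 5) / r ^ 2 := hfin
      _ ≤ (C1 + C2 + 1) * (1 + |a| ^ 5) / r ^ 2 := hlast
    · -- small r : crude estimate
      have hsπ : (0:ℝ) < Real.sqrt (2 * Real.pi) := Real.sqrt_pos.2 (by positivity)
      have hIub : I ≤ 2 * T * (1 / Real.sqrt (2 * Real.pi)) := by
        rw [hId, intervalIntegral.integral_of_le (by linarith)]
        have hb : ∀ y ∈ Set.Ioc (a - T) (a + T),
            stdNormalPDF y ≤ 1 / Real.sqrt (2 * Real.pi) := by
          intro y _
          show Real.exp (-(y ^ 2) / 2) / Real.sqrt (2 * Real.pi) ≤ _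
          apply (div_le_div_iff_of_pos_right hsπ).2
          calc Real.exp (-(y ^ 2) / 2) ≤ Real.exp 0 :=
                Real.exp_le_exp.2
                  (div_nonpos_of_nonpos_of_nonneg (neg_nonpos_of_nonneg (sq_nonneg y))
                    (by norm_num))
          _ = 1 := Real.exp_zero
        have hint1 : IntegrableOn stdNormalPDF (Set.Ioc (a - T) (a + T)) :=
          phi_cont.integrableOn_Ioc
        have hint2 : IntegrableOn (fun _ : ℝ => 1 / Real.sqrt (2 * Real.pi))
            (Set.Ioc (a - T) (a + T)) := integrableOn_const measure_Ioc_lt_top.ne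
        calc (∫ y in Set.Ioc (a - T) (a + T), stdNormalPDF y)
            ≤ ∫ _ in Set.Ioc (a - T) (a + T), 1 / Real.sqrt (2 * Real.pi) :=
              setIntegral_mono_on hint1 hint2 measurableSet_Ioc hb
        _ = 2 * T * (1 / Real.sqrt (2 * Real.pi)) := by
              rw [setIntegral_const, measureReal_def, Real.volume_Ioc, smul_eq_mul,
                ENNReal.toReal_ofReal (by linarith)]
              ring
      have hI0 : 0 ≤ I := by
        rw [hId, intervalIntegral.integral_of_le (by linarith)]
        exact setIntegral_nonneg measurableSet_Ioc fun y _ => (phi_pos y).le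
      have ha2 : a ^ 2 ≤ R := by
        have h1 : a ^ 2 ≤ (r ^ ((1:ℝ)/6)) ^ 2 := by
          rw [← sq_abs]; exact pow_le_pow_left₀ (abs_nonneg a) hδk 2
        have h2 : (r ^ ((1:ℝ)/6)) ^ 2 = r ^ ((1:ℝ)/3) := by
          rw [← Real.rpow_natCast (r ^ ((1:ℝ)/6)) 2, ← Real.rpow_mul hr.le]; norm_num
        have h3 : r ^ ((1:ℝ)/3) ≤ R := by
          rcases le_or_gt r 1 with h | h
          · calc r ^ ((1:ℝ)/3) ≤ 1 := Real.rpow_le_one hr.le h (by norm_num)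
            _ ≤ R := hR1
          · calc r ^ ((1:ℝ)/3) ≤ r ^ (1:ℝ) :=
                  Real.rpow_le_rpow_of_exponent_le h.le (by norm_num)
            _ = r := Real.rpow_one r
            _ ≤ R := hrR.le
        rw [h2] at h1
        linarith
      have hφa_eq : φa = Real.exp (-(a ^ 2) / 2) / Real.sqrt (2 * Real.pi) := by
        rw [hφad]; rfl
      have hpart1 : I / (q / s * φa) ≤ Real.exp (R / 2) := by
        rw [h2T, div_le_iff₀ (by positivity)]
        have hexp : 1 ≤ Real.exp (R / 2) * Real.exp (-(a ^ 2) / 2) := by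
          rw [← Real.exp_add]
          calc (1:ℝ) = Real.exp 0 := Real.exp_zero.symm
          _ ≤ _ := Real.exp_le_exp.2 (by linarith)
        have h5 : 1 / Real.sqrt (2 * Real.pi)
            ≤ Real.exp (R / 2) * Real.exp (-(a ^ 2) / 2) / Real.sqrt (2 * Real.pi) :=
          (div_le_div_iff_of_pos_right hsπ).2 hexp
        calc I ≤ 2 * T * (1 / Real.sqrt (2 * Real.pi)) := hIub
        _ ≤ 2 * T * (Real.exp (R / 2) * Real.exp (-(a ^ 2) / 2) / Real.sqrt (2 * Real.pi)) :=
              mul_le_mul_of_nonneg_left h5 (by positivity)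
        _ = Real.exp (R / 2) * (2 * T * φa) := by rw [hφa_eq]; ring
      have hc_bound : |q ^ 2 / (24 * r * p) * (a ^ 2 - 1)| ≤ q ^ 2 * (R + 1) / (24 * r * p) := by
        rw [abs_mul, abs_of_pos (by positivity : (0:ℝ) < q ^ 2 / (24 * r * p))]
        have hb : |a ^ 2 - 1| ≤ R + 1 := by
          rw [abs_le]
          have := sq_nonneg a
          constructor
          · linarith
          · linarith
        calc q ^ 2 / (24 * r * p) * |a ^ 2 - 1| ≤ q ^ 2 / (24 * r * p) * (R + 1) :=
              mul_le_mul_of_nonneg_left hb (by positivity)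
        _ = q ^ 2 * (R + 1) / (24 * r * p) := by ring
      have hEb : |E| ≤ Real.exp (R / 2) + 1 + q ^ 2 * (R + 1) / (24 * r * p) := by
        rw [hEd]
        have hx0 : 0 ≤ I / (q / s * φa) := div_nonneg hI0 (by positivity)
        have htri : |I / (q / s * φa) - 1 - q ^ 2 / (24 * r * p) * (a ^ 2 - 1)|
            ≤ |I / (q / s * φa)| + 1 + |q ^ 2 / (24 * r * p) * (a ^ 2 - 1)| := by
          have h1 : |I / (q / s * φa) - 1 - q ^ 2 / (24 * r * p) * (a ^ 2 - 1)|
              ≤ |I / (q / s * φa) - 1| + |q ^ 2 / (24 * r * p) * (a ^ 2 - 1)| := abs_sub _ _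
          have h2 : |I / (q / s * φa) - 1| ≤ |I / (q / s * φa)| + |(1:ℝ)| := abs_sub _ _
          rw [abs_one] at h2
          linarith
        calc |I / (q / s * φa) - 1 - q ^ 2 / (24 * r * p) * (a ^ 2 - 1)|
            ≤ |I / (q / s * φa)| + 1 + |q ^ 2 / (24 * r * p) * (a ^ 2 - 1)| := htri
        _ ≤ Real.exp (R / 2) + 1 + q ^ 2 * (R + 1) / (24 * r * p) := by
              rw [abs_of_nonneg hx0]
              exact add_le_add (add_le_add hpart1 le_rfl) hc_bound
      have hfin2 : Real.exp (R / 2) + 1 + q ^ 2 * (R + 1) / (24 * r * p) ≤ C1 / r ^ 2 := by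
        rw [hC1d, le_div_iff₀ (by positivity)]
        have h1 : Real.exp (R / 2) * r ^ 2 ≤ Real.exp (R / 2) * R ^ 2 :=
          mul_le_mul_of_nonneg_left (pow_le_pow_left₀ hr.le hrR.le 2) (Real.exp_pos _).le
        have h2 : r ^ 2 ≤ R ^ 2 := pow_le_pow_left₀ hr.le hrR.le 2
        have h3 : q ^ 2 * (R + 1) / (24 * r * p) * r ^ 2 = (1 - p) ^ 2 * (R + 1) * r / (24 * p) := by
          rw [hqd]; field_simp
        have h4 : (1 - p) ^ 2 * (R + 1) * r / (24 * p) ≤ (1 - p) ^ 2 * R * (R + 1) / (24 * p) := by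
          apply div_le_div_of_nonneg_right _ (by positivity)
          calc (1 - p) ^ 2 * (R + 1) * r ≤ (1 - p) ^ 2 * (R + 1) * R :=
                mul_le_mul_of_nonneg_left hrR.le
                  (mul_nonneg (sq_nonneg _) (by linarith))
          _ = (1 - p) ^ 2 * R * (R + 1) := by ring
        calc (Real.exp (R / 2) + 1 + q ^ 2 * (R + 1) / (24 * r * p)) * r ^ 2
            = Real.exp (R / 2) * r ^ 2 + r ^ 2 + q ^ 2 * (R + 1) / (24 * r * p) * r ^ 2 := by ring
        _ ≤ Real.exp (R / 2) * R ^ 2 + R ^ 2 + (1 - p) ^ 2 * R * (R + 1) / (24 * p) := by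
              rw [h3]; exact add_le_add (add_le_add h1 h2) h4
      have hlast : C1 / r ^ 2 ≤ (C1 + C2 + 1) * (1 + |a| ^ 5) / r ^ 2 := by
        apply div_le_div_of_nonneg_right _ (by positivity)
        calc C1 = C1 * 1 := (mul_one C1).symm
        _ ≤ (C1 + C2 + 1) * (1 + |a| ^ 5) :=
            mul_le_mul (by linarith) (by linarith [pow_nonneg (abs_nonneg a) 5])
              zero_le_one (by linarith)
      calc |E| ≤ Real.exp (R / 2) + 1 + q ^ 2 * (R + 1) / (24 * r * p) := hEb
      _ ≤ C1 / r ^ 2 := hfin2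
      _ ≤ (C1 + C2 + 1) * (1 + |a| ^ 5) / r ^ 2 := hlast
end
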